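/- Let G be a finite group, N a normal subgroup of G, and F an algebraically closed field of characteristic p > 0. Let P be a projective indecomposable F[G]-module and let U be a simple F[N]-submodule of the restriction of P to N. Then there exists a simple F[G]-submodule E of P such that U is isomorphic to an F[N]-submodule of the restriction of E to N. -/

import Mathlib

open MonoidAlgebra

set_option maxHeartbeats 1000000
set_option synthInstance.maxHeartbeats 400000

section Aux

variable {F : Type} [Field F] {G : Type} [Group G] {N : Subgroup G}

/-- Conjugation by `g` as an algebra automorphism of `F[N]`, for `N` normal. -/
private noncomputable def sigAux (hN : N.Normal) (g : G) :
    MonoidAlgebra F N ≃ₐ[F] MonoidAlgebra F N :=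
  MonoidAlgebra.domCongr F F (@MulAut.conjNormal G _ N hN g : N ≃* N)

private lemma sigAux_single (hN : N.Normal) (g : G) (n : N) (c : F) :
    sigAux hN g (single n c) = single (⟨g * n * g⁻¹, hN.conj_mem n n.2 g⟩ : N) c := by
  unfold sigAux
  rw [domCongr_single]
  have h : ((MulAut.conjNormal g) n : G) = ((⟨g * ↑n * g⁻¹, hN.conj_mem n n.2 g⟩ : N) : G) :=
    @MulAut.conjNormal_apply G _ N hN g n
  exact congrArg (fun m => single m c) (Subtype.ext h)

private lemma sigAux_inv (hN : N.Normal) (g : G) (a : MonoidAlgebra F N) :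
    sigAux hN g⁻¹ (sigAux hN g a) = a := by
  induction a using MonoidAlgebra.induction_linear with
  | zero => simp only [map_zero]
  | add f h hf hh => simp only [map_add, hf, hh]
  | single n c =>
      rw [sigAux_single, sigAux_single]
      congr 1
      apply Subtype.ext
      show g⁻¹ * (g * ↑n * g⁻¹) * g⁻¹⁻¹ = ↑n
      group

private lemma commAux (hN : N.Normal) (g : G) (a : MonoidAlgebra F N) :
    single g (1:F) * mapDomainAlgHom F F N.subtype a
      = mapDomainAlgHom F F N.subtype (sigAux hN g a) * single g 1 := by
  induction a using MonoidAlgebra.induction_linear with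
  | zero => simp only [map_zero, mul_zero, zero_mul]
  | add f h hf hh => simp only [map_add, mul_add, add_mul, hf, hh]
  | single n c =>
      rw [sigAux_single]
      simp only [mapDomainAlgHom_apply, MonoidAlgebra.mapDomain_single,
        single_mul_single, one_mul, mul_one]
      congr 1
      simp [mul_assoc]

variable {P : Type} [AddCommGroup P] [Module (MonoidAlgebra F G) P]

private theorem aux_main [instA : Module (MonoidAlgebra F N) P] (hN : N.Normal) [Fintype G]
    (hsmul : ∀ (a : MonoidAlgebra F N) (x : P),
      a • x = (mapDomainAlgHom F F N.subtype a : MonoidAlgebra F G) • x)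
    (U : Submodule (MonoidAlgebra F N) P)
    (hU : IsSimpleModule (MonoidAlgebra F N) U) :
    ∃ E : Submodule (MonoidAlgebra F G) P,
      IsSimpleModule (MonoidAlgebra F G) E ∧
      ∃ f : U →ₗ[MonoidAlgebra F N] P,
        Function.Injective f ∧ ∀ u : U, f u ∈ E := by
  classical
  have hact : ∀ (g : G) (a : MonoidAlgebra F N) (x : P),
      (single g (1:F) : MonoidAlgebra F G) • (a • x)
        = (sigAux hN g a) • ((single g (1:F) : MonoidAlgebra F G) • x) := by
    intro g a x
    rw [hsmul, hsmul, ← mul_smul, ← mul_smul, commAux hN]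
  have hundo : ∀ (g : G) (x : P),
      (single g⁻¹ (1:F) : MonoidAlgebra F G) • (single g (1:F) : MonoidAlgebra F G) • x = x := by
    intro g x
    rw [← mul_smul, single_mul_single, inv_mul_cancel, one_mul, ← MonoidAlgebra.one_def, one_smul]
  have hundo' : ∀ (g : G) (x : P),
      (single g (1:F) : MonoidAlgebra F G) • (single g⁻¹ (1:F) : MonoidAlgebra F G) • x = x := by
    intro g x
    have := hundo g⁻¹ x
    rwa [inv_inv] at this
  -- conjugates of a submodule
  let cS : G → Submodule (MonoidAlgebra F N) P → Submodule (MonoidAlgebra F N) P := fun g V =>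
    { carrier := {x | ∃ u ∈ V, (single g (1:F) : MonoidAlgebra F G) • u = x}
      add_mem' := by
        rintro x y ⟨u, hu, rfl⟩ ⟨v, hv, rfl⟩
        exact ⟨u + v, V.add_mem hu hv, smul_add _ u v⟩
      zero_mem' := ⟨0, V.zero_mem, smul_zero _⟩
      smul_mem' := by
        rintro a x ⟨u, hu, rfl⟩
        refine ⟨sigAux hN g⁻¹ a • u, V.smul_mem _ hu, ?_⟩
        have := hact g (sigAux hN g⁻¹ a) u
        rw [this]
        have h2 : sigAux hN g (sigAux hN g⁻¹ a) = a := by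
          have := sigAux_inv hN g⁻¹ a
          rwa [inv_inv] at this
        rw [h2] }
  have hmem_cS : ∀ (g : G) (V : Submodule (MonoidAlgebra F N) P) (x : P),
      x ∈ cS g V ↔ ∃ u ∈ V, (single g (1:F) : MonoidAlgebra F G) • u = x :=
    fun g V x => Iff.rfl
  have hmono : ∀ (g : G), Monotone (cS g) := by
    intro g V W hVW x hx
    obtain ⟨u, hu, rfl⟩ := hx
    exact ⟨u, hVW hu, rfl⟩
  have hback : ∀ (g : G) (V : Submodule (MonoidAlgebra F N) P), cS g⁻¹ (cS g V) = V := by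
    intro g V
    ext x
    constructor
    · rintro ⟨y, ⟨u, hu, rfl⟩, rfl⟩
      rw [hundo]
      exact hu
    · intro hx
      exact ⟨(single g (1:F) : MonoidAlgebra F G) • x, ⟨x, hx, rfl⟩, hundo g x⟩
  have hback' : ∀ (g : G) (V : Submodule (MonoidAlgebra F N) P), cS g (cS g⁻¹ V) = V := by
    intro g V
    have := hback g⁻¹ V
    rwa [inv_inv] at this
  have hatom_cS : ∀ (g : G) (V : Submodule (MonoidAlgebra F N) P), IsAtom V → IsAtom (cS g V) := by
    intro g V hV
    let e : Submodule (MonoidAlgebra F N) P ≃o Submodule (MonoidAlgebra F N) P :=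
      { toFun := cS g
        invFun := cS g⁻¹
        left_inv := hback g
        right_inv := hback' g
        map_rel_iff' := by
          intro V W
          simp only [Equiv.coe_fn_mk]
          constructor
          · intro h
            have h2 := hmono g⁻¹ h
            rwa [hback, hback] at h2
          · intro h
            exact hmono g h }
    exact (e.isAtom_iff V).mpr hV
  have hUatom : IsAtom U := isSimpleModule_iff_isAtom.mp hU
  -- the sum of all conjugates of U
  let WA : Submodule (MonoidAlgebra F N) P := ⨆ g : G, cS g U
  have hle : ∀ g : G, cS g U ≤ WA := fun g => le_iSup (fun g => cS g U) g
  have hgu_mem : ∀ (g : G) (u : P), u ∈ U →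
      (single g (1:F) : MonoidAlgebra F G) • u ∈ WA :=
    fun g u hu => hle g ⟨u, hu, rfl⟩
  have hUle : U ≤ cS 1 U := by
    intro x hx
    refine ⟨x, hx, ?_⟩
    rw [← MonoidAlgebra.one_def, one_smul]
  haveI hss : IsSemisimpleModule (MonoidAlgebra F N) WA := by
    have e : (⨆ g ∈ Set.univ, cS g U) = WA := by rw [iSup_univ]
    rw [← e]
    exact isSemisimpleModule_biSup_of_isSemisimpleModule_submodule
      (fun g _ => letI := isSimpleModule_iff_isAtom.mpr (hatom_cS g U hUatom); inferInstance)
  have hgstab : ∀ (g : G) (x : P), x ∈ WA →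
      (single g (1:F) : MonoidAlgebra F G) • x ∈ WA := by
    intro g x hx
    refine Submodule.iSup_induction
      (motive := fun x => (single g (1:F) : MonoidAlgebra F G) • x ∈ WA)
      (fun g => cS g U) hx ?_ ?_ ?_
    · rintro g' y ⟨u, hu, rfl⟩
      rw [← mul_smul, single_mul_single, mul_one]
      exact hgu_mem (g * g') u hu
    · show (single g (1:F) : MonoidAlgebra F G) • (0:P) ∈ WA
      rw [smul_zero]
      exact WA.zero_mem
    · intro x y hx hy
      show (single g (1:F) : MonoidAlgebra F G) • (x + y) ∈ WA
      rw [smul_add]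
      exact WA.add_mem hx hy
  -- WA as an F[G]-submodule
  let WR : Submodule (MonoidAlgebra F G) P :=
    { carrier := (WA : Set P)
      add_mem' := fun hx hy => WA.add_mem hx hy
      zero_mem' := WA.zero_mem
      smul_mem' := by
        intro r x hx
        show r • x ∈ (WA : Set P)
        induction r using MonoidAlgebra.induction_linear with
        | zero => rw [zero_smul]; exact WA.zero_mem
        | add f h hf hh => rw [add_smul]; exact WA.add_mem hf hh
        | single g c =>
            have hs : (single g c : MonoidAlgebra F G)
                = single g (1:F) * mapDomainAlgHom F F N.subtype (single (1:N) c) := by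
              simp [single_mul_single]
            show (single g c : MonoidAlgebra F G) • x ∈ (WA : Set P)
            rw [hs, mul_smul, ← hsmul]
            exact hgstab g _ (WA.smul_mem _ hx) }
  have hmemWR : ∀ x : P, x ∈ WR ↔ x ∈ WA := fun x => Iff.rfl
  -- a nonzero element of U
  obtain ⟨u₀, hu₀U, hu₀⟩ := (Submodule.ne_bot_iff U).mp hUatom.1
  -- F-module structure on P
  letI instF : Module F P := Module.compHom P (algebraMap F (MonoidAlgebra F G))
  haveI : IsScalarTower F (MonoidAlgebra F G) P :=
    ⟨fun c r x => by
      show (c • r) • x = (algebraMap F (MonoidAlgebra F G) c) • r • x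
      rw [Algebra.smul_def, mul_smul]⟩
  haveI : Module.Finite F (MonoidAlgebra F G) :=
    Module.Finite.equiv
      (((Finsupp.linearEquivFunOnFinite F F G).symm.trans (MonoidAlgebra.coeffLinearEquiv F).symm : (G → F) ≃ₗ[F] MonoidAlgebra F G))
  -- the cyclic F[G]-submodule generated by u₀
  let Wspan : Submodule (MonoidAlgebra F G) P := Submodule.span (MonoidAlgebra F G) {u₀}
  have hWspan_le : Wspan ≤ WR := by
    rw [Submodule.span_le, Set.singleton_subset_iff]
    exact (hmemWR u₀).mpr (hle 1 (hUle hu₀U))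
  haveI : Module.Finite F Wspan := by
    let φ : MonoidAlgebra F G →ₗ[F] P :=
      { toFun := fun r => r • u₀
        map_add' := fun r s => add_smul r s u₀
        map_smul' := fun c r => smul_assoc c r u₀ }
    have hrange : Wspan.restrictScalars F = LinearMap.range φ := by
      ext x
      rw [Submodule.restrictScalars_mem, LinearMap.mem_range]
      show x ∈ Submodule.span (MonoidAlgebra F G) {u₀} ↔ _
      rw [Submodule.mem_span_singleton]
      exact Iff.rfl
    have h2 : Module.Finite F (LinearMap.range φ) := Module.Finite.range φ
    rw [← hrange] at h2
    exact h2
  haveI : IsArtinian F Wspan := inferInstance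
  haveI : IsArtinian (MonoidAlgebra F G) Wspan := isArtinian_of_tower F inferInstance
  haveI : IsAtomic (Submodule (MonoidAlgebra F G) Wspan) :=
    isAtomic_of_orderBot_wellFounded_lt IsWellFounded.wf
  have hu₀_mem : u₀ ∈ Wspan := Submodule.mem_span_singleton_self u₀
  obtain ⟨a, ha⟩ : ∃ a : Submodule (MonoidAlgebra F G) Wspan, IsAtom a := by
    rcases IsAtomic.eq_bot_or_exists_atom_le (⊤ : Submodule (MonoidAlgebra F G) Wspan) with
      h | ⟨a, ha, -⟩
    · exfalso
      have h2 : (⟨u₀, hu₀_mem⟩ : Wspan) ∈ (⊤ : Submodule (MonoidAlgebra F G) Wspan) := trivial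
      rw [h, Submodule.mem_bot] at h2
      exact hu₀ (congrArg Subtype.val h2)
    · exact ⟨a, ha⟩
  -- the simple F[G]-submodule E
  let E : Submodule (MonoidAlgebra F G) P := Submodule.map Wspan.subtype a
  have hEle : E ≤ Wspan := Submodule.map_subtype_le _ _
  have hE_ne : E ≠ ⊥ := by
    intro h
    apply ha.1
    apply Submodule.map_injective_of_injective (Submodule.injective_subtype Wspan)
    rw [Submodule.map_bot]
    exact h
  have hE_atom : IsAtom E := by
    refine ⟨hE_ne, fun b hb => ?_⟩
    have hble : b ≤ Wspan := le_trans hb.le hEle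
    have hmapb : Submodule.map Wspan.subtype (Submodule.comap Wspan.subtype b) = b := by
      rw [Submodule.map_comap_subtype, inf_eq_right.mpr hble]
    have hlt : Submodule.comap Wspan.subtype b < a := by
      rw [lt_iff_le_and_ne]
      constructor
      · rw [← Submodule.map_le_map_iff_of_injective (Submodule.injective_subtype Wspan)]
        rw [hmapb]
        exact hb.le
      · intro h
        apply hb.ne
        rw [← hmapb, h]
    have h3 := ha.2 _ hlt
    rw [← hmapb, h3, Submodule.map_bot]
  have hEWA : ∀ x : P, x ∈ E → x ∈ WA := fun x hx => (hmemWR x).mp (hWspan_le (hEle hx))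
  -- E as an F[N]-submodule, inside WA
  let EA : Submodule (MonoidAlgebra F N) P :=
    { carrier := (E : Set P)
      add_mem' := fun hx hy => E.add_mem hx hy
      zero_mem' := E.zero_mem
      smul_mem' := fun a x hx => by
        show a • x ∈ (E : Set P)
        rw [hsmul]
        exact E.smul_mem _ hx }
  let E' : Submodule (MonoidAlgebra F N) WA := Submodule.comap WA.subtype EA
  obtain ⟨C, hC⟩ := exists_isCompl E'
  let π := Submodule.linearProjOfIsCompl E' C hC
  -- find a conjugate of U on which π does not vanish
  have hexists : ∃ (g : G) (u : P) (hu : u ∈ U),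
      π ⟨(single g (1:F) : MonoidAlgebra F G) • u, hgu_mem g u hu⟩ ≠ 0 := by
    by_contra hall
    push_neg at hall
    have hzero : ∀ (x : P) (hx : x ∈ WA), π ⟨x, hx⟩ = 0 := by
      intro x hx
      refine Submodule.iSup_induction' (motive := fun x hx => π ⟨x, hx⟩ = 0)
        (p := fun g => cS g U) ?_ ?_ ?_ hx
      · rintro g y ⟨u, hu, rfl⟩
        exact hall g u hu
      · exact map_zero π
      · intro x y hx hy hCx hCy
        show π (⟨x, hx⟩ + ⟨y, hy⟩) = 0
        rw [map_add, hCx, hCy, add_zero]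
    obtain ⟨e₀, he₀E, he₀⟩ := (Submodule.ne_bot_iff E).mp hE_atom.1
    have he₀WA : e₀ ∈ WA := hEWA e₀ he₀E
    have he₀E' : (⟨e₀, he₀WA⟩ : WA) ∈ E' := he₀E
    have h1 : π ⟨e₀, he₀WA⟩ = ⟨⟨e₀, he₀WA⟩, he₀E'⟩ :=
      Submodule.linearProjOfIsCompl_apply_left hC ⟨⟨e₀, he₀WA⟩, he₀E'⟩
    rw [hzero e₀ he₀WA] at h1
    apply he₀
    have h2 := congrArg (fun z : E' => ((z : WA) : P)) h1
    simpa using h2.symm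
  obtain ⟨g, u₁, hu₁U, hπ⟩ := hexists
  -- the embedding f
  let val : E' → P := fun e => ((e : WA) : P)
  let fraw : U → P := fun u =>
    (single g⁻¹ (1:F) : MonoidAlgebra F G) •
      val (π ⟨(single g (1:F) : MonoidAlgebra F G) • (u : P), hgu_mem g u u.2⟩)
  have hf_mem : ∀ u : U, fraw u ∈ E := by
    intro u
    apply E.smul_mem
    exact (π ⟨(single g (1:F) : MonoidAlgebra F G) • (u : P), hgu_mem g u u.2⟩).2
  have hf_smul : ∀ (a : MonoidAlgebra F N) (u : U), fraw (a • u) = a • fraw u := by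
    intro a u
    have h1 : (⟨(single g (1:F) : MonoidAlgebra F G) • ((a • u : U) : P),
        hgu_mem g _ (a • u).2⟩ : WA)
        = sigAux hN g a • ⟨(single g (1:F) : MonoidAlgebra F G) • (u : P), hgu_mem g u u.2⟩ := by
      apply Subtype.ext
      show (single g (1:F) : MonoidAlgebra F G) • (a • (u : P))
        = (sigAux hN g a) • ((single g (1:F) : MonoidAlgebra F G) • (u : P))
      exact hact g a u
    show (single g⁻¹ (1:F) : MonoidAlgebra F G) •
        val (π ⟨(single g (1:F) : MonoidAlgebra F G) • ((a • u : U) : P), hgu_mem g _ (a • u).2⟩)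
      = a • fraw u
    rw [h1, map_smul]
    have h3 : val (sigAux hN g a • π ⟨(single g (1:F) : MonoidAlgebra F G) • (u : P),
        hgu_mem g u u.2⟩)
        = (mapDomainAlgHom F F N.subtype (sigAux hN g a) : MonoidAlgebra F G) •
          val (π ⟨(single g (1:F) : MonoidAlgebra F G) • (u : P), hgu_mem g u u.2⟩) :=
      hsmul _ _
    rw [h3, ← mul_smul, commAux hN g⁻¹ (sigAux hN g a), sigAux_inv hN g a, mul_smul, ← hsmul]
  let f : U →ₗ[MonoidAlgebra F N] P :=
    { toFun := fraw
      map_add' := by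
        intro u v
        show (single g⁻¹ (1:F) : MonoidAlgebra F G) •
            val (π ⟨(single g (1:F) : MonoidAlgebra F G) • ((u + v : U) : P),
              hgu_mem g _ (u + v).2⟩)
          = fraw u + fraw v
        have h1 : (⟨(single g (1:F) : MonoidAlgebra F G) • ((u + v : U) : P),
            hgu_mem g _ (u + v).2⟩ : WA)
            = ⟨(single g (1:F) : MonoidAlgebra F G) • (u : P), hgu_mem g u u.2⟩
              + ⟨(single g (1:F) : MonoidAlgebra F G) • (v : P), hgu_mem g v v.2⟩ := by
          apply Subtype.ext
          show (single g (1:F) : MonoidAlgebra F G) • ((u : P) + (v : P)) = _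
          rw [smul_add]
          rfl
        rw [h1, map_add]
        show (single g⁻¹ (1:F) : MonoidAlgebra F G) • (val _ + val _) = _
        rw [smul_add]
      map_smul' := fun a u => hf_smul a u }
  have hfne : f ⟨u₁, hu₁U⟩ ≠ 0 := by
    intro h
    apply hπ
    have h2 := congrArg (fun z => (single g (1:F) : MonoidAlgebra F G) • z) h
    simp only [smul_zero] at h2
    have h3 : val (π ⟨(single g (1:F) : MonoidAlgebra F G) • u₁, hgu_mem g u₁ hu₁U⟩) = 0 := by
      have h4 := hundo' g (val (π ⟨(single g (1:F) : MonoidAlgebra F G) • u₁, hgu_mem g u₁ hu₁U⟩))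
      rw [← h4]
      exact h2
    exact Subtype.ext (Subtype.ext h3)
  haveI := hU
  have hker : LinearMap.ker f = ⊥ := by
    rcases eq_bot_or_eq_top (LinearMap.ker f) with h | h
    · exact h
    · exfalso
      apply hfne
      rw [← LinearMap.mem_ker, h]
      trivial
  exact ⟨E, isSimpleModule_iff_isAtom.mpr hE_atom, f, LinearMap.ker_eq_bot.mp hker, hf_mem⟩

end Aux

/-- Let `P` be a projective indecomposable `F[G]`-module and `U` a simple
`F[N]`-submodule of `Res_N P`.  Then there exists a simple `F[G]`-submodule `E` of `P` such
that `U` is isomorphic to an `F[N]`-submodule of `Res_N E` (equivalently: `U` embeds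
`F[N]`-linearly into `P` with image inside `E`). -/
theorem simple_constituent_of_socle_restriction
    (F : Type) [Field F] [IsAlgClosed F] (p : ℕ) (hp : 0 < p) (hchar : CharP F p)
    (G : Type) [Group G] [Fintype G] (N : Subgroup G) (hN : N.Normal)
    (P : Type) [AddCommGroup P] [Module (MonoidAlgebra F G) P] :
    let ι : MonoidAlgebra F N →ₐ[F] MonoidAlgebra F G :=
      MonoidAlgebra.mapDomainAlgHom F F N.subtype
    let _instP : Module (MonoidAlgebra F N) P := Module.compHom P ι.toRingHom
    -- P projective indecomposable
    Module.Projective (MonoidAlgebra F G) P →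
    (∀ X Y : Submodule (MonoidAlgebra F G) P, IsCompl X Y → X = ⊥ ∨ Y = ⊥) →
    -- U a simple F[N]-submodule of Res_N P
    ∀ U : Submodule (MonoidAlgebra F N) P, IsSimpleModule (MonoidAlgebra F N) U →
      ∃ E : Submodule (MonoidAlgebra F G) P,
        IsSimpleModule (MonoidAlgebra F G) E ∧
        ∃ f : U →ₗ[MonoidAlgebra F N] P,
          Function.Injective f ∧ ∀ u : U, f u ∈ E := by
  intro ι instP _ _ U hU
  exact aux_main (instA := instP) hN (fun a x => rfl) U hU
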